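/- Fix ε > 0, δ > 0, ν ∈ ℝ, p ∈ ℤ and t ≥ 0, set σ(k) = (24ε/δ⁴) sin⁴(k/2), and define v_n(t) = (ν/(2π)) ∫_{−π}^{π} e^{i k (n−p) − σ(k) t} dk for n ∈ ℤ. Then there exist constants C > 0 and c > 0 (depending on ε, δ, ν and t but not on n) such that |v_n(t)| ≤ C e^{−c |n−p|} for all n ∈ ℤ; i.e. the delta-function initial perturbation remains exponentially localized in component number, so the linearized step-flow system is strongly local. -/

import Mathlib

open Complex Real intervalIntegral

lemma abs_sin_le'' (z : ℂ) : ‖Complex.sin z‖ ≤ Real.cosh z.im := by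
  rw [Complex.sin, Real.cosh_eq]
  calc ‖(Complex.exp (-z * I) - Complex.exp (z * I)) * I / 2‖
      = ‖Complex.exp (-z * I) - Complex.exp (z * I)‖ / 2 := by
        simp [map_div₀]
    _ ≤ (‖Complex.exp (-z * I)‖ + ‖Complex.exp (z * I)‖) / 2 := by
        gcongr
        exact norm_sub_le (Complex.exp (-z*I)) (Complex.exp (z*I))
    _ = (Real.exp z.im + Real.exp (-z.im)) / 2 := by
        rw [Complex.norm_exp, Complex.norm_exp]
        simp [Complex.mul_re]

lemma shift_contour (m : ℤ) (B η : ℝ) :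
    (∫ k in (-Real.pi)..Real.pi,
        Complex.exp (I * (k : ℂ) * (m : ℂ) - (B : ℂ) * Complex.sin ((k : ℂ)/2) ^ 4)) =
    ∫ k in (-Real.pi)..Real.pi,
      Complex.exp (I * ((k : ℂ) + (η : ℂ) * I) * (m : ℂ)
        - (B : ℂ) * Complex.sin (((k : ℂ) + (η : ℂ) * I)/2) ^ 4) := by
  set f : ℂ → ℂ := fun z => Complex.exp (I * z * (m : ℂ) - (B : ℂ) * Complex.sin (z/2) ^ 4)
    with hf
  have hd : Differentiable ℂ f := by
    apply Differentiable.cexp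
    apply Differentiable.sub
    · exact (differentiable_id.const_mul I).mul_const _
    · exact ((Complex.differentiable_sin.comp (differentiable_id.div_const 2)).pow 4).const_mul _
  have hper : ∀ z : ℂ, f (z + 2 * Real.pi) = f z := by
    intro z
    simp only [hf]
    have h1 : Complex.sin ((z + 2 * (Real.pi:ℂ))/2) = -Complex.sin (z/2) := by
      rw [show (z + 2 * (Real.pi:ℂ))/2 = z/2 + Real.pi by ring, Complex.sin_add,
        Complex.sin_pi, Complex.cos_pi]
      ring
    rw [h1, show I * (z + 2 * (Real.pi:ℂ)) * (m:ℂ) - (B:ℂ) * (-Complex.sin (z/2)) ^ 4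
        = (I * z * (m:ℂ) - (B:ℂ) * Complex.sin (z/2) ^ 4) + (m:ℂ) * (2 * Real.pi * I) by ring,
      Complex.exp_add, Complex.exp_int_mul_two_pi_mul_I, mul_one]
  have h0 := Complex.integral_boundary_rect_eq_zero_of_differentiableOn f
    ⟨-Real.pi, 0⟩ ⟨Real.pi, η⟩ hd.differentiableOn
  simp only [Complex.ofReal_zero] at h0
  have hside : (∫ y in (0:ℝ)..η, f ((Real.pi:ℝ) + (y:ℂ) * I))
      = ∫ y in (0:ℝ)..η, f ((-Real.pi:ℝ) + (y:ℂ) * I) := by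
    apply intervalIntegral.integral_congr
    intro y _
    have := hper (((-Real.pi:ℝ):ℂ) + (y:ℂ) * I)
    show f (((Real.pi:ℝ):ℂ) + (y:ℂ) * I) = f (((-Real.pi:ℝ):ℂ) + (y:ℂ) * I)
    rw [← this]
    congr 1
    push_cast
    ring
  rw [hside] at h0
  have hmain : (∫ x : ℝ in (-Real.pi)..Real.pi, f ((x:ℂ) + (0:ℂ) * I))
      = ∫ x : ℝ in (-Real.pi)..Real.pi, f ((x:ℂ) + (η:ℂ) * I) := by
    have := h0
    simp only [smul_eq_mul] at this
    linear_combination this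
  calc (∫ k in (-Real.pi)..Real.pi,
        Complex.exp (I * (k : ℂ) * (m : ℂ) - (B : ℂ) * Complex.sin ((k : ℂ)/2) ^ 4))
      = ∫ x : ℝ in (-Real.pi)..Real.pi, f ((x:ℂ) + (0:ℂ) * I) := by
        apply intervalIntegral.integral_congr
        intro x _
        simp [hf]
    _ = ∫ x : ℝ in (-Real.pi)..Real.pi, f ((x:ℂ) + (η:ℂ) * I) := hmain

set_option maxHeartbeats 1000000 in
theorem stmt_5 (ε δ ν t : ℝ) (hε : 0 < ε) (hδ : 0 < δ) (p : ℤ) (ht : 0 ≤ t)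
    (σ : ℝ → ℝ) (hσ : ∀ x : ℝ, σ x = 24 * ε / δ ^ 4 * Real.sin (x / 2) ^ 4)
    (v : ℤ → ℂ)
    (hv : ∀ n : ℤ,
      v n = ((ν / (2 * Real.pi) : ℝ) : ℂ) *
        ∫ k in (-Real.pi)..Real.pi,
          Complex.exp (Complex.I * (k : ℂ) * ((n : ℂ) - (p : ℂ)) - ((σ k * t : ℝ) : ℂ))) :
    ∃ C > (0 : ℝ), ∃ c > (0 : ℝ), ∀ n : ℤ,
      ‖v n‖ ≤ C * Real.exp (-c * ((|n - p| : ℤ) : ℝ)) := by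
  have hpi : (0:ℝ) < Real.pi := Real.pi_pos
  set A : ℝ := 24 * ε / δ ^ 4 with hA
  have hApos : 0 < A := by positivity
  have hBnn : 0 ≤ A * t := mul_nonneg hApos.le ht
  set K : ℝ := A * t * Real.cosh (1/2) ^ 4 with hK
  refine ⟨|ν| * Real.exp K + 1, by positivity, 1, one_pos, ?_⟩
  intro n
  set m : ℤ := n - p with hm
  have hvn : v n = ((ν / (2 * Real.pi) : ℝ) : ℂ) *
      ∫ k in (-Real.pi)..Real.pi,
        Complex.exp (I * (k:ℂ) * (m:ℂ) - ((A*t : ℝ):ℂ) * Complex.sin ((k:ℂ)/2)^4) := by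
    have hfun : (fun k : ℝ => Complex.exp (Complex.I * (k : ℂ) * ((n : ℂ) - (p : ℂ))
        - ((σ k * t : ℝ) : ℂ)))
        = fun k : ℝ => Complex.exp (I * (k:ℂ) * (m:ℂ)
            - ((A*t : ℝ):ℂ) * Complex.sin ((k:ℂ)/2)^4) := by
      funext k
      congr 1
      rw [hσ k]
      push_cast [Complex.ofReal_sin, hm]
      ring
    rw [hv n, hfun]
  set η : ℝ := if 0 ≤ m then 1 else -1 with hη
  have hηm : η * (m:ℝ) = |(m:ℝ)| := by
    by_cases h : 0 ≤ m
    · have h' : (0:ℝ) ≤ (m:ℝ) := by exact_mod_cast h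
      rw [hη, if_pos h, one_mul, _root_.abs_of_nonneg h']
    · have h' : (m:ℝ) < 0 := by exact_mod_cast lt_of_not_ge h
      rw [hη, if_neg h, neg_one_mul, _root_.abs_of_neg h']
  have hcosh : Real.cosh (η/2) = Real.cosh (1/2) := by
    by_cases h : 0 ≤ m
    · rw [hη, if_pos h]
    · rw [hη, if_neg h]
      rw [show (-1:ℝ)/2 = -(1/2) by ring, Real.cosh_neg]
  rw [hvn, shift_contour m (A*t) η]
  have hptbd : ∀ k ∈ Set.uIcc (-Real.pi) Real.pi,
      ‖Complex.exp (I * ((k:ℂ) + (η:ℂ) * I) * (m:ℂ)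
        - ((A*t : ℝ):ℂ) * Complex.sin (((k:ℂ) + (η:ℂ) * I)/2) ^ 4)‖
      ≤ Real.exp (K - |(m:ℝ)|) := by
    intro k _
    set S : ℂ := Complex.sin (((k:ℂ) + (η:ℂ) * I)/2) ^ 4 with hS
    rw [Complex.norm_exp]
    apply Real.exp_le_exp.mpr
    have h1 : (I * ((k:ℂ) + (η:ℂ) * I) * (m:ℂ)).re = -(η * (m:ℝ)) := by
      simp [Complex.mul_re, Complex.mul_im]
    have h2 : ((((A*t : ℝ):ℂ)) * S).re = (A*t) * S.re := by
      simp [Complex.mul_re]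
    have h3 : |S.re| ≤ Real.cosh (1/2) ^ 4 := by
      refine (Complex.abs_re_le_norm S).trans ?_
      rw [hS, norm_pow]
      have him : (((k:ℂ) + (η:ℂ) * I)/2).im = η/2 := by
        simp
      have := abs_sin_le'' (((k:ℂ) + (η:ℂ) * I)/2)
      rw [him, hcosh] at this
      exact pow_le_pow_left₀ (norm_nonneg _) this 4
    rw [Complex.sub_re, h1, h2, hηm]
    have : -((A*t) * S.re) ≤ (A*t) * Real.cosh (1/2) ^ 4 := by
      calc -((A*t) * S.re) = (A*t) * (-S.re) := by ring
        _ ≤ (A*t) * |S.re| := mul_le_mul_of_nonneg_left (neg_le_abs _) hBnn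
        _ ≤ (A*t) * Real.cosh (1/2) ^ 4 := mul_le_mul_of_nonneg_left h3 hBnn
    rw [hK]
    linarith
  have hnorm : ‖∫ k in (-Real.pi)..Real.pi,
      Complex.exp (I * ((k:ℂ) + (η:ℂ) * I) * (m:ℂ)
        - ((A*t : ℝ):ℂ) * Complex.sin (((k:ℂ) + (η:ℂ) * I)/2) ^ 4)‖
      ≤ Real.exp (K - |(m:ℝ)|) * |Real.pi - (-Real.pi)| := by
    apply intervalIntegral.norm_integral_le_of_norm_le_const
    intro k hk
    exact hptbd k (Set.uIoc_subset_uIcc hk)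
  rw [norm_mul]
  have habs1 : ‖((ν / (2 * Real.pi) : ℝ) : ℂ)‖ = |ν| / (2 * Real.pi) := by
    rw [Complex.norm_real, Real.norm_eq_abs, abs_div, _root_.abs_of_pos (show (0:ℝ) < 2 * Real.pi by positivity)]
  have hpi2 : |Real.pi - (-Real.pi)| = 2 * Real.pi := by
    rw [_root_.abs_of_pos (show (0:ℝ) < Real.pi - -Real.pi by linarith)]; ring
  rw [habs1]
  calc |ν| / (2 * Real.pi) * ‖∫ k in (-Real.pi)..Real.pi,
        Complex.exp (I * ((k:ℂ) + (η:ℂ) * I) * (m:ℂ)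
          - ((A*t : ℝ):ℂ) * Complex.sin (((k:ℂ) + (η:ℂ) * I)/2) ^ 4)‖
      ≤ |ν| / (2 * Real.pi) * (Real.exp (K - |(m:ℝ)|) * (2 * Real.pi)) := by
        rw [← hpi2]
        exact mul_le_mul_of_nonneg_left (by exact hnorm)
          (by positivity)
    _ = |ν| * Real.exp K * Real.exp (-|(m:ℝ)|) := by
        rw [Real.exp_sub, Real.exp_neg]
        field_simp
    _ ≤ (|ν| * Real.exp K + 1) * Real.exp (-1 * ((|m| : ℤ) : ℝ)) := by
        have : ((|m| : ℤ) : ℝ) = |(m:ℝ)| := by push_cast; rfl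
        rw [this, neg_one_mul]
        have h1 : (0:ℝ) < Real.exp (-|(m:ℝ)|) := Real.exp_pos _
        nlinarith [Real.exp_pos (-|(m:ℝ)|)]
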